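/- arXiv:2512.22497 — 3 statements merged into one kernel-verified Lean document; each statement's English description precedes it below -/
import Mathlib

section
/- If T is a bounded linear operator on a complex Banach space with T^n = T for some n ≥ 2, then every element of the spectrum of T is an eigenvalue, i.e., σ(T) = σ_p(T). -/
open Polynomial

theorem npotent_spectrum_eq_point_spectrum
    {X : Type*} [NormedAddCommGroup X] [NormedSpace ℂ X] [CompleteSpace X]
    (T : X →L[ℂ] X) (n : ℕ) (hn : 2 ≤ n) (hT : T ^ n = T) :
    spectrum ℂ T = {lam : ℂ | ∃ x : X, x ≠ 0 ∧ T x = lam • x} := by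
  rcases subsingleton_or_nontrivial X with hX | hX
  · have h1 : spectrum ℂ T = ∅ := by
      ext μ
      simp only [spectrum.mem_iff, Set.mem_empty_iff_false, iff_false, not_not]
      exact isUnit_of_subsingleton _
    rw [h1]
    ext μ
    simp only [Set.mem_empty_iff_false, Set.mem_setOf_eq, false_iff]
    rintro ⟨x, hx, -⟩
    exact hx (Subsingleton.elim x 0)
  ext lam
  simp only [Set.mem_setOf_eq]
  constructor
  · intro hlam
    -- T satisfies p = X^n - X
    set p : ℂ[X] := Polynomial.X ^ n - Polynomial.X with hp
    have haev : aeval T p = 0 := by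
      simp [hp, map_sub, aeval_X_pow, aeval_X, hT]
    -- lam^n = lam
    have hroot : p.IsRoot lam := by
      have := spectrum.subset_polynomial_aeval T p ⟨lam, hlam, rfl⟩
      rw [haev, spectrum.zero_eq] at this
      simpa [IsRoot.def] using this
    -- factor p = (X - C lam) * q with q lam ≠ 0
    set q : ℂ[X] := p / (Polynomial.X - C lam) with hq
    have hfac : (Polynomial.X - C lam) * q = p := mul_div_eq_iff_isRoot.2 hroot
    have hqlam : q.eval lam = p.derivative.eval lam := by
      have hd : p.derivative = q + (Polynomial.X - C lam) * q.derivative := by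
        have := congrArg derivative hfac
        rw [derivative_mul] at this
        simpa [mul_comm] using this.symm
      simp [hd]
    have hql_ne : q.eval lam ≠ 0 := by
      rw [hqlam]
      have hdp : p.derivative = C (n : ℂ) * Polynomial.X ^ (n - 1) - 1 := by
        simp [hp, derivative_X_pow]
      rw [hdp]
      simp only [eval_sub, eval_mul, eval_C, eval_pow, eval_X, eval_one]
      rcases eq_or_ne lam 0 with rfl | hl0
      · have : (0:ℂ) ^ (n - 1) = 0 := by
          apply zero_pow
          omega
        simp [this]
      · have hln : lam ^ (n - 1) = 1 := by
          have h1 : lam ^ n = lam := by simpa [hp, IsRoot.def, sub_eq_zero] using hroot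
          have h2 : lam ^ (n - 1) * lam = 1 * lam := by
            rw [one_mul, ← pow_succ]
            have : n - 1 + 1 = n := by omega
            rw [this, h1]
          exact mul_right_cancel₀ hl0 h2
        rw [hln, mul_one]
        intro h
        have hn' : (n : ℂ) = 1 := by linear_combination h
        have : n = 1 := by exact_mod_cast hn'
        omega
    -- suppose no eigenvector
    by_contra hno
    push_neg at hno
    -- T - lam is injective
    have hinj : ∀ x : X, T x - lam • x = 0 → x = 0 := by
      intro x hx
      by_contra hx0
      exact hno x hx0 (by linear_combination (norm := module) hx)
    have haevq : aeval T q = 0 := by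
      have h0 : (aeval T (Polynomial.X - C lam)) * aeval T q = 0 := by
        rw [← map_mul, hfac, haev]
      ext x
      have := congrFun (congrArg DFunLike.coe h0) x
      simp only [ContinuousLinearMap.mul_apply, map_sub, aeval_X, aeval_C,
        ContinuousLinearMap.zero_apply, ContinuousLinearMap.sub_apply] at this ⊢
      refine hinj _ ?_
      simpa [Algebra.algebraMap_eq_smul_one] using this
    have := spectrum.subset_polynomial_aeval T q ⟨lam, hlam, rfl⟩
    rw [haevq, spectrum.zero_eq] at this
    exact hql_ne (by simpa using this)
  · rintro ⟨x, hx, hTx⟩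
    rw [spectrum.mem_iff]
    intro hu
    rcases hu with ⟨u, hu⟩
    have h0 : (algebraMap ℂ (X →L[ℂ] X) lam - T) x = 0 := by
      simp [Algebra.algebraMap_eq_smul_one, hTx]
    have : x = 0 := by
      have h1 : (↑u⁻¹ * (algebraMap ℂ (X →L[ℂ] X) lam - T)) x = x := by
        rw [← hu, Units.inv_mul]; rfl
      rw [ContinuousLinearMap.mul_apply, h0, map_zero] at h1
      exact h1.symm
    exact hx this
end

section
/- Let n ≥ 2 and T a bounded operator on a complex Banach space with T^n = T. Let ω = e^{2πi/(n-1)}. For each j, define P_j = (1/(n-1)) Σ_{k=1}^{n-1} ω^{-jk} T^k. Then P_j is a projection (P_j^2 = P_j), P_j commutes with T, and T P_j = ω^j P_j. -/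
theorem npotent_riesz_projection_properties
    {X : Type*} [NormedAddCommGroup X] [NormedSpace ℂ X] [CompleteSpace X]
    (T : X →L[ℂ] X) (n : ℕ) (hn : 2 ≤ n) (hT : T ^ n = T)
    (ω : ℂ) (hω : IsPrimitiveRoot ω (n - 1))
    (j : ℕ) (hj : j ≤ n - 2)
    (P : X →L[ℂ] X)
    (hP : P = ((n : ℂ) - 1)⁻¹ • ∑ k ∈ Finset.Icc 1 (n - 1), (ω ^ (j * k))⁻¹ • T ^ k) :
    P * P = P ∧ T * P = P * T ∧ T * P = ω ^ j • P := by
  obtain ⟨m, rfl⟩ : ∃ m, n = m + 2 := ⟨n - 2, by omega⟩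
  have hω1 : ω ^ (m + 1) = 1 := hω.pow_eq_one
  have hωne : ω ≠ 0 := by
    intro h; rw [h, zero_pow (by omega)] at hω1; exact zero_ne_one hω1
  have hωpne : ∀ r : ℕ, ω ^ r ≠ 0 := fun r => pow_ne_zero r hωne
  set S : X →L[ℂ] X := ∑ i ∈ Finset.range (m + 1), (ω ^ (j * (1 + i)))⁻¹ • T ^ (1 + i)
    with hS
  have hPS : P = ((m : ℂ) + 1)⁻¹ • S := by
    rw [hP, hS, ← Finset.Ico_add_one_right_eq_Icc, Finset.sum_Ico_eq_sum_range]
    norm_num [show ((m:ℂ)+2)-1 = (m:ℂ)+1 by ring]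
  -- key : T * S = ω ^ j • S
  have hTS : T * S = ω ^ j • S := by
    rw [hS, Finset.mul_sum, Finset.smul_sum]
    have L : ∀ i ∈ Finset.range (m + 1), T * ((ω ^ (j * (1 + i)))⁻¹ • T ^ (1 + i))
        = (ω ^ (j * (1 + i)))⁻¹ • T ^ (1 + i + 1) := by
      intro i _
      rw [mul_smul_comm, ← pow_succ']
    have R : ∀ i ∈ Finset.range (m + 1), ω ^ j • ((ω ^ (j * (1 + i)))⁻¹ • T ^ (1 + i))
        = (ω ^ (j * i))⁻¹ • T ^ (1 + i) := by
      intro i _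
      rw [smul_smul]
      congr 1
      rw [mul_add, mul_one, pow_add, mul_inv]
      field_simp
    rw [Finset.sum_congr rfl L, Finset.sum_congr rfl R,
      Finset.sum_range_succ, Finset.sum_range_succ']
    congr 1
    · apply Finset.sum_congr rfl
      intro i _
      congr 2
      ring
    · have h1 : ω ^ (j * (1 + m)) = 1 := by
        rw [mul_comm, pow_mul, add_comm, hω1, one_pow]
      have h2 : T ^ (1 + m + 1) = T := by
        rw [show 1 + m + 1 = m + 2 by omega, hT]
      simp [h1, h2]
  have hTkS : ∀ k : ℕ, T ^ k * S = (ω ^ j) ^ k • S := by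
    intro k
    induction k with
    | zero => simp
    | succ k ih =>
      rw [pow_succ', mul_assoc, ih, mul_smul_comm, hTS, smul_smul, ← pow_succ]
  have hSS : S * S = ((m : ℂ) + 1) • S := by
    nth_rewrite 1 [hS]
    rw [Finset.sum_mul]
    have : ∀ i ∈ Finset.range (m + 1),
        ((ω ^ (j * (1 + i)))⁻¹ • T ^ (1 + i)) * S = S := by
      intro i _
      rw [smul_mul_assoc, hTkS, smul_smul, ← pow_mul,
        inv_mul_cancel₀ (hωpne _), one_smul]
    rw [Finset.sum_congr rfl this, Finset.sum_const, Finset.card_range]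
    simp [← Nat.cast_smul_eq_nsmul ℂ]
  have hm1 : (m : ℂ) + 1 ≠ 0 := Nat.cast_add_one_ne_zero m
  refine ⟨?_, ?_, ?_⟩
  · rw [hPS, smul_mul_smul_comm, hSS, smul_smul, mul_assoc,
      inv_mul_cancel₀ hm1, mul_one]
  · have hST : S * T = T * S := by
      rw [hS, Finset.sum_mul, Finset.mul_sum]
      apply Finset.sum_congr rfl
      intro i _
      rw [smul_mul_assoc, mul_smul_comm, ← pow_succ, ← pow_succ']
    rw [hPS, mul_smul_comm, smul_mul_assoc, hST]
  · rw [hPS, mul_smul_comm, hTS, smul_comm]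
end

section
/- Let n ≥ 2, T bounded on a complex Banach space with T^n = T, ω a primitive (n-1)-th root of unity, and P_j = (1/(n-1)) Σ_{k=1}^{n-1} ω^{-jk} T^k. Then ω^j is an eigenvalue of T if and only if P_j ≠ 0. -/
theorem npotent_eigenvalue_iff_projection_ne_zero
    {X : Type*} [NormedAddCommGroup X] [NormedSpace ℂ X] [CompleteSpace X]
    (T : X →L[ℂ] X) (n : ℕ) (hn : 2 ≤ n) (hT : T ^ n = T)
    (ω : ℂ) (hω : IsPrimitiveRoot ω (n - 1))
    (j : ℕ) (hj : j ≤ n - 2)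
    (P : X →L[ℂ] X)
    (hP : P = ((n : ℂ) - 1)⁻¹ • ∑ k ∈ Finset.Icc 1 (n - 1), (ω ^ (j * k))⁻¹ • T ^ k) :
    (∃ x : X, x ≠ 0 ∧ T x = ω ^ j • x) ↔ P ≠ 0 := by
  obtain ⟨s, rfl⟩ : ∃ s, n = s + 2 := ⟨n - 2, by omega⟩
  have hωm : ω ^ (s + 1) = 1 := by
    have := hω.pow_eq_one
    simpa using this
  have hω0 : ω ≠ 0 := by
    intro h
    rw [h, zero_pow (by omega)] at hωm
    exact zero_ne_one hωm
  have hc : ((s + 2 : ℕ) : ℂ) - 1 = ((s + 1 : ℕ) : ℂ) := by push_cast; ring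
  have hcne : ((s + 1 : ℕ) : ℂ) ≠ 0 := Nat.cast_ne_zero.mpr (by omega)
  have hIcc : s + 2 - 1 = s + 1 := rfl
  constructor
  · rintro ⟨x, hx, hTx⟩
    have key : ∀ k, (T ^ k) x = ω ^ (j * k) • x := by
      intro k
      induction k with
      | zero => simp
      | succ k ih =>
        rw [pow_succ, ContinuousLinearMap.mul_apply, hTx, map_smul, ih, smul_smul,
          ← pow_add, show j + j * k = j * (k + 1) by ring]
    have hPx : P x = x := by
      rw [hP, hIcc, ContinuousLinearMap.smul_apply, ContinuousLinearMap.sum_apply]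
      have : ∀ k ∈ Finset.Icc 1 (s + 1), ((ω ^ (j * k))⁻¹ • T ^ k) x = x := by
        intro k _
        rw [ContinuousLinearMap.smul_apply, key, smul_smul,
          inv_mul_cancel₀ (pow_ne_zero _ hω0), one_smul]
      rw [Finset.sum_congr rfl this, Finset.sum_const, Nat.card_Icc]
      rw [hc]
      rw [show s + 1 + 1 - 1 = s + 1 from rfl, ← Nat.cast_smul_eq_nsmul ℂ, smul_smul,
        inv_mul_cancel₀ hcne, one_smul]
    intro hP0
    rw [hP0] at hPx
    exact hx (by simpa using hPx.symm)
  · intro hPne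
    have hTP : T * P = ω ^ j • P := by
      rw [hP, mul_smul_comm, smul_comm (ω ^ j)]
      congr 1
      rw [Finset.mul_sum, Finset.smul_sum]
      simp_rw [mul_smul_comm, ← pow_succ']
      rw [hIcc, ← Finset.Ico_add_one_right_eq_Icc, Finset.sum_Ico_eq_sum_range,
        Finset.sum_Ico_eq_sum_range]
      rw [show s + 1 + 1 - 1 = s + 1 from rfl]
      rw [Finset.sum_range_succ]
      conv_rhs => rw [Finset.sum_range_succ']
      congr 1
      · apply Finset.sum_congr rfl
        intro k _
        rw [smul_smul]
        congr 1
        have h2 : ω ^ (j * (1 + (k + 1))) = ω ^ j * ω ^ (j * (1 + k)) := by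
          rw [← pow_add]; congr 1; ring
        rw [h2, mul_inv, ← mul_assoc, mul_inv_cancel₀ (pow_ne_zero _ hω0), one_mul]
      · -- boundary terms
        rw [smul_smul, show 1 + 0 = 1 by ring, pow_one, mul_one,
          mul_inv_cancel₀ (pow_ne_zero _ hω0), one_smul]
        have h1 : ω ^ (j * (1 + s)) = 1 := by
          rw [show j * (1 + s) = (s + 1) * j by ring, pow_mul, hωm, one_pow]
        rw [h1, inv_one, one_smul, show 1 + s + 1 = s + 2 from by ring, hT]
    obtain ⟨y, hy⟩ : ∃ y, P y ≠ 0 := by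
      by_contra h
      push_neg at h
      exact hPne (ContinuousLinearMap.ext fun y => by simp [h y])
    refine ⟨P y, hy, ?_⟩
    have := congrArg (fun f : X →L[ℂ] X => f y) hTP
    simpa [ContinuousLinearMap.mul_apply] using this
end
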